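/- Let Cl(p,q,r) be a (possibly degenerate) Clifford algebra with n = p+q+r. The twisted centralizer of the grade-1 subspace equals Λ_r, the subalgebra generated by the null generators: α(X)·ι(v) = ι(v)·X for all vectors v if and only if X lies in the subalgebra generated by the r generators that square to zero. -/

import Mathlib

open CliffordAlgebra

noncomputable section

/-- Diagonal weights: `p` entries `+1`, `q` entries `-1`, `r` entries `0`. -/
def cliffSig (p q : ℕ) (i : ℕ) : ℝ := if i < p then 1 else if i < p + q then -1 else 0

/-- The quadratic form of signature `(p, q, r)` on `ℝ^(p+q+r)`. -/
def Qf (p q r : ℕ) : QuadraticForm ℝ (Fin (p + q + r) → ℝ) :=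
  QuadraticMap.weightedSumSquares ℝ (fun i : Fin (p + q + r) => cliffSig p q (i : ℕ))

/-- The `i`-th generator `e_i` of `Cl(p,q,r)`. -/
def gen (p q r : ℕ) (i : Fin (p + q + r)) : CliffordAlgebra (Qf p q r) :=
  ι (Qf p q r) (Pi.single i 1)

/-- The grade-`m` subspace `Cl^m(p,q,r)`: span of products of `m` distinct generators
with increasing indices. -/
def gradeSubspace (p q r m : ℕ) : Submodule ℝ (CliffordAlgebra (Qf p q r)) :=
  Submodule.span ℝ {x | ∃ l : List (Fin (p + q + r)),
    l.Chain' (· < ·) ∧ l.length = m ∧ x = (l.map (gen p q r)).prod}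

/-- `Λ_r`: the subalgebra generated by the `r` null generators. -/
def LambdaR (p q r : ℕ) : Subalgebra ℝ (CliffordAlgebra (Qf p q r)) :=
  Algebra.adjoin ℝ {x | ∃ i : Fin (p + q + r), p + q ≤ (i : ℕ) ∧ x = gen p q r i}

/-- `Λ^d_r`: the degree-`d` component of `Λ_r`. -/
def LambdaDeg (p q r d : ℕ) : Submodule ℝ (CliffordAlgebra (Qf p q r)) :=
  Submodule.span ℝ {x | ∃ l : List (Fin (p + q + r)),
    l.Chain' (· < ·) ∧ l.length = d ∧ (∀ i ∈ l, p + q ≤ (i : ℕ)) ∧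
    x = (l.map (gen p q r)).prod}

/-- The pseudoscalar `e_1 ⋯ e_n`. -/
def pseudoscalar (p q r : ℕ) : CliffordAlgebra (Qf p q r) :=
  ((List.finRange (p + q + r)).map (gen p q r)).prod

namespace Stmt13Aux

variable (p q r : ℕ)

lemma sig_zero_iff (i : ℕ) : cliffSig p q i = 0 ↔ p + q ≤ i := by
  unfold cliffSig
  split_ifs with h1 h2 <;> norm_num <;> omega

lemma sig_sq {i : ℕ} (h : cliffSig p q i ≠ 0) :
    cliffSig p q i * cliffSig p q i = 1 := by
  unfold cliffSig at h ⊢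
  split_ifs at h ⊢ <;> simp_all

lemma Qf_single (i : Fin (p + q + r)) :
    Qf p q r (Pi.single i 1) = cliffSig p q i := by
  rw [Qf, QuadraticMap.weightedSumSquares_apply]
  rw [Finset.sum_eq_single i]
  · simp
  · intro j _ hj
    simp [Pi.single_eq_of_ne hj]
  · simp

lemma polar_Qf (a b : Fin (p + q + r) → ℝ) :
    QuadraticMap.polar (Qf p q r) a b
      = ∑ i : Fin (p + q + r), cliffSig p q (i : ℕ) * (2 * a i * b i) := by
  simp only [QuadraticMap.polar, Qf, QuadraticMap.weightedSumSquares_apply,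
    Pi.add_apply, smul_eq_mul]
  rw [← Finset.sum_sub_distrib, ← Finset.sum_sub_distrib]
  exact Finset.sum_congr rfl fun i _ => by ring

lemma polar_single (i : Fin (p + q + r)) (v : Fin (p + q + r) → ℝ) :
    QuadraticMap.polar (Qf p q r) (Pi.single i 1) v
      = 2 * cliffSig p q (i : ℕ) * v i := by
  rw [polar_Qf, Finset.sum_eq_single i]
  · simp; ring
  · intro j _ hj
    simp [Pi.single_eq_of_ne hj]
  · simp

lemma gen_sq (i : Fin (p + q + r)) :
    gen p q r i * gen p q r i
      = algebraMap ℝ (CliffordAlgebra (Qf p q r)) (cliffSig p q (i : ℕ)) := by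
  rw [gen, ι_sq_scalar, Qf_single]

lemma gen_anticomm {i j : Fin (p + q + r)} (h : i ≠ j) :
    gen p q r i * gen p q r j = -(gen p q r j * gen p q r i) := by
  have hs := ι_mul_ι_add_swap (Q := Qf p q r) (Pi.single i 1) (Pi.single j 1)
  rw [polar_single, Pi.single_eq_of_ne h] at hs
  simp only [mul_zero, map_zero] at hs
  simp only [gen]
  exact eq_neg_of_add_eq_zero_left hs

lemma gen_null_swap {j : Fin (p + q + r)} (hj : p + q ≤ (j : ℕ))
    (v : Fin (p + q + r) → ℝ) :
    ι (Qf p q r) v * gen p q r j = -(gen p q r j * ι (Qf p q r) v) := by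
  have hs := ι_mul_ι_add_swap (Q := Qf p q r) (Pi.single j 1) v
  rw [polar_single, (sig_zero_iff p q (j : ℕ)).2 hj] at hs
  simp only [mul_zero, zero_mul, map_zero] at hs
  simp only [gen]
  exact eq_neg_of_add_eq_zero_right hs

/-- The twisted conjugation `X ↦ s_i • (e_i * α(X) * e_i)` (identity for null `i`). -/
def cmap (i : Fin (p + q + r)) :
    CliffordAlgebra (Qf p q r) →ₗ[ℝ] CliffordAlgebra (Qf p q r) :=
  if cliffSig p q (i : ℕ) = 0 then LinearMap.id
  else cliffSig p q (i : ℕ) •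
    (LinearMap.mulRight ℝ (gen p q r i) ∘ₗ LinearMap.mulLeft ℝ (gen p q r i) ∘ₗ
      (involute (Q := Qf p q r)).toLinearMap)

lemma cmap_apply_of_ne {i : Fin (p + q + r)} (h : cliffSig p q (i : ℕ) ≠ 0)
    (X : CliffordAlgebra (Qf p q r)) :
    cmap p q r i X
      = cliffSig p q (i : ℕ) • (gen p q r i * involute X * gen p q r i) := by
  rw [cmap, if_neg h]
  rfl

lemma cmap_apply_of_eq {i : Fin (p + q + r)} (h : cliffSig p q (i : ℕ) = 0)
    (X : CliffordAlgebra (Qf p q r)) : cmap p q r i X = X := by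
  rw [cmap, if_pos h]; rfl

lemma conj_conj {i : Fin (p + q + r)} (h : cliffSig p q (i : ℕ) ≠ 0)
    (x : CliffordAlgebra (Qf p q r)) :
    cliffSig p q (i : ℕ) • (gen p q r i * (gen p q r i * x)) = x := by
  rw [← mul_assoc, gen_sq, Algebra.algebraMap_eq_smul_one, smul_mul_assoc,
    one_mul, smul_smul, sig_sq p q h, one_smul]

lemma cmap_fix {X : CliffordAlgebra (Qf p q r)}
    (hX : ∀ v, involute X * ι (Qf p q r) v = ι (Qf p q r) v * X)
    (i : Fin (p + q + r)) : cmap p q r i X = X := by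
  by_cases h : cliffSig p q (i : ℕ) = 0
  · exact cmap_apply_of_eq p q r h X
  · rw [cmap_apply_of_ne p q r h, mul_assoc, gen, hX (Pi.single i 1), ← gen]
    exact conj_conj p q r h X

lemma cmap_mul (i : Fin (p + q + r)) (X Y : CliffordAlgebra (Qf p q r)) :
    cmap p q r i (X * Y) = cmap p q r i X * cmap p q r i Y := by
  by_cases h : cliffSig p q (i : ℕ) = 0
  · simp only [cmap_apply_of_eq p q r h]
  · simp only [cmap_apply_of_ne p q r h, map_mul]
    rw [smul_mul_smul_comm]
    have key : gen p q r i * involute X * gen p q r i *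
          (gen p q r i * involute Y * gen p q r i)
        = cliffSig p q (i : ℕ) •
          (gen p q r i * (involute X * involute Y) * gen p q r i) := by
      have h1 : gen p q r i * involute X * gen p q r i *
            (gen p q r i * involute Y * gen p q r i)
          = gen p q r i * involute X * (gen p q r i * gen p q r i) *
            (involute Y * gen p q r i) := by noncomm_ring
      rw [h1, gen_sq, ← Algebra.commutes, ← Algebra.smul_def, smul_mul_assoc]
      congr 1
      noncomm_ring
    rw [key, smul_smul, sig_sq p q h, one_mul]

lemma cmap_one (i : Fin (p + q + r)) : cmap p q r i 1 = 1 := by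
  by_cases h : cliffSig p q (i : ℕ) = 0
  · exact cmap_apply_of_eq p q r h 1
  · rw [cmap_apply_of_ne p q r h, map_one, mul_one, gen_sq,
      Algebra.algebraMap_eq_smul_one, smul_smul, sig_sq p q h, one_smul]

lemma cmap_gen (i j : Fin (p + q + r)) :
    cmap p q r i (gen p q r j)
      = (if cliffSig p q (i : ℕ) ≠ 0 ∧ j = i then (-1 : ℝ) else 1) • gen p q r j := by
  by_cases h : cliffSig p q (i : ℕ) = 0
  · rw [cmap_apply_of_eq p q r h]
    simp [h]
  · rw [cmap_apply_of_ne p q r h,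
      show involute (gen p q r j) = -(gen p q r j) from by rw [gen, involute_ι]]
    by_cases hj : j = i
    · subst hj
      rw [mul_neg, neg_mul, mul_assoc, gen_sq, ← Algebra.commutes,
        ← Algebra.smul_def, smul_neg, smul_smul, sig_sq p q h, one_smul]
      simp [h]
    · have h3 : gen p q r i * gen p q r j * gen p q r i
          = -(cliffSig p q (i : ℕ) • gen p q r j) := by
        rw [gen_anticomm p q r (fun hij => hj hij.symm), neg_mul, mul_assoc,
          gen_sq, ← Algebra.commutes, ← Algebra.smul_def]
      rw [mul_neg, neg_mul, h3, neg_neg, smul_smul, sig_sq p q h, one_smul]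
      simp [h, hj]

lemma cmap_prod (i : Fin (p + q + r)) (l : List (Fin (p + q + r)))
    (hl : l.Nodup) :
    cmap p q r i ((l.map (gen p q r)).prod)
      = (if cliffSig p q i ≠ 0 ∧ i ∈ l then (-1 : ℝ) else 1)
          • (l.map (gen p q r)).prod := by
  induction l with
  | nil => simp [cmap_one]
  | cons j t ih =>
    rw [List.nodup_cons] at hl
    simp only [List.map_cons, List.prod_cons]
    rw [cmap_mul, cmap_gen, ih hl.2, smul_mul_smul_comm]
    congr 1
    by_cases h : cliffSig p q i = 0
    · simp [h]
    · by_cases hij : i = j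
      · subst hij
        simp [h, hl.1]
      · have hji : ¬ j = i := fun h' => hij h'.symm
        simp [h, hij, hji]

/-- The averaging projection associated to `cmap i`. -/
def Pmap (i : Fin (p + q + r)) :
    CliffordAlgebra (Qf p q r) →ₗ[ℝ] CliffordAlgebra (Qf p q r) :=
  (2⁻¹ : ℝ) • (LinearMap.id + cmap p q r i)

lemma Pmap_apply (i : Fin (p + q + r)) (X : CliffordAlgebra (Qf p q r)) :
    Pmap p q r i X = (2⁻¹ : ℝ) • (X + cmap p q r i X) := rfl

lemma Pmap_fix {i : Fin (p + q + r)} {X : CliffordAlgebra (Qf p q r)}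
    (h : cmap p q r i X = X) : Pmap p q r i X = X := by
  rw [Pmap_apply, h, ← two_smul ℝ X, smul_smul]
  norm_num

lemma Pmap_prod (i : Fin (p + q + r)) (l : List (Fin (p + q + r)))
    (hl : l.Nodup) :
    Pmap p q r i ((l.map (gen p q r)).prod)
      = if cliffSig p q i ≠ 0 ∧ i ∈ l then 0 else (l.map (gen p q r)).prod := by
  by_cases h : cliffSig p q i ≠ 0 ∧ i ∈ l
  · rw [if_pos h, Pmap_apply, cmap_prod p q r i l hl, if_pos h]
    simp
  · rw [if_neg h]
    apply Pmap_fix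
    rw [cmap_prod p q r i l hl, if_neg h, one_smul]

/-- Composition of the projections `Pmap` over a list of indices. -/
def foldP (L : List (Fin (p + q + r))) :
    CliffordAlgebra (Qf p q r) →ₗ[ℝ] CliffordAlgebra (Qf p q r) :=
  L.foldr (fun i f => Pmap p q r i ∘ₗ f) LinearMap.id

lemma foldP_fix {X : CliffordAlgebra (Qf p q r)}
    (hX : ∀ i, cmap p q r i X = X) (L : List (Fin (p + q + r))) :
    foldP p q r L X = X := by
  induction L with
  | nil => rfl
  | cons i L ih =>
    show Pmap p q r i (foldP p q r L X) = X
    rw [ih, Pmap_fix p q r (hX i)]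

lemma foldP_prod (L : List (Fin (p + q + r))) (l : List (Fin (p + q + r)))
    (hl : l.Nodup) :
    foldP p q r L ((l.map (gen p q r)).prod)
      = if ∃ i ∈ L, cliffSig p q i ≠ 0 ∧ i ∈ l then 0
        else (l.map (gen p q r)).prod := by
  induction L with
  | nil => simp [foldP]
  | cons i L ih =>
    show Pmap p q r i (foldP p q r L _) = _
    rw [ih]
    by_cases hin : ∃ j ∈ L, cliffSig p q j ≠ 0 ∧ j ∈ l
    · rw [if_pos hin, map_zero, if_pos]
      obtain ⟨j, hj, hj2⟩ := hin
      exact ⟨j, List.mem_cons_of_mem _ hj, hj2⟩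
    · rw [if_neg hin, Pmap_prod p q r i l hl]
      by_cases hi : cliffSig p q i ≠ 0 ∧ i ∈ l
      · rw [if_pos hi, if_pos ⟨i, List.mem_cons_self, hi⟩]
      · rw [if_neg hi, if_neg]
        rintro ⟨j, hjL, hj⟩
        rcases List.mem_cons.1 hjL with h' | h'
        · exact hi (h' ▸ hj)
        · exact hin ⟨j, h', hj⟩

lemma mon_mem_LambdaR (l : List (Fin (p + q + r)))
    (h : ∀ i ∈ l, p + q ≤ (i : ℕ)) :
    (l.map (gen p q r)).prod ∈ LambdaR p q r := by
  induction l with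
  | nil => simpa using one_mem (LambdaR p q r)
  | cons j t ih =>
    simp only [List.map_cons, List.prod_cons]
    exact mul_mem
      (Algebra.subset_adjoin ⟨j, h j List.mem_cons_self, rfl⟩)
      (ih fun i hi => h i (List.mem_cons_of_mem j hi))

/-- The span of increasing monomials. -/
def monSpan : Submodule ℝ (CliffordAlgebra (Qf p q r)) :=
  Submodule.span ℝ {x | ∃ l : List (Fin (p + q + r)),
    l.Chain' (· < ·) ∧ x = (l.map (gen p q r)).prod}

lemma gen_mul_mon (l : List (Fin (p + q + r))) (hl : l.Pairwise (· < ·))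
    (i : Fin (p + q + r)) :
    ∃ (a : ℝ) (m : List (Fin (p + q + r))), m.Pairwise (· < ·) ∧
      (∀ x ∈ m, x = i ∨ x ∈ l) ∧
      gen p q r i * (l.map (gen p q r)).prod = a • (m.map (gen p q r)).prod := by
  induction l generalizing i with
  | nil =>
    refine ⟨1, [i], List.pairwise_singleton _ _, by simp, by simp⟩
  | cons j t ih =>
    rw [List.pairwise_cons] at hl
    rcases lt_trichotomy i j with hij | hij | hij
    · refine ⟨1, i :: j :: t, ?_, ?_, by simp⟩
      · rw [List.pairwise_cons]
        refine ⟨?_, List.pairwise_cons.2 hl⟩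
        intro b hb
        rcases List.mem_cons.1 hb with h' | h'
        · exact h' ▸ hij
        · exact lt_trans hij (hl.1 b h')
      · intro x hx
        rcases List.mem_cons.1 hx with h' | h'
        · exact Or.inl h'
        · exact Or.inr h'
    · subst hij
      refine ⟨cliffSig p q i, t, hl.2, fun x hx => Or.inr (List.mem_cons_of_mem _ hx), ?_⟩
      simp only [List.map_cons, List.prod_cons]
      rw [← mul_assoc, gen_sq, ← Algebra.smul_def]
    · obtain ⟨a, m, hm, hmem, heq⟩ := ih hl.2 i
      refine ⟨-a, j :: m, ?_, ?_, ?_⟩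
      · rw [List.pairwise_cons]
        refine ⟨?_, hm⟩
        intro b hb
        rcases hmem b hb with h' | h'
        · exact h' ▸ hij
        · exact hl.1 b h'
      · intro x hx
        rcases List.mem_cons.1 hx with h' | h'
        · exact Or.inr (h' ▸ (List.mem_cons_self (a := j) (l := t)))
        · rcases hmem x h' with h'' | h''
          · exact Or.inl h''
          · exact Or.inr (List.mem_cons_of_mem _ h'')
      · simp only [List.map_cons, List.prod_cons]
        rw [← mul_assoc, gen_anticomm p q r (ne_of_gt hij), neg_mul, mul_assoc,
          heq, mul_smul_comm, neg_smul, ← smul_neg]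

lemma gen_mul_mem {X : CliffordAlgebra (Qf p q r)} (hX : X ∈ monSpan p q r)
    (i : Fin (p + q + r)) : gen p q r i * X ∈ monSpan p q r := by
  induction hX using Submodule.span_induction with
  | mem x hx =>
    obtain ⟨l, hl, rfl⟩ := hx
    obtain ⟨a, m, hm, _, heq⟩ :=
      gen_mul_mon p q r l (List.isChain_iff_pairwise.1 hl) i
    rw [heq]
    exact Submodule.smul_mem _ a
      (Submodule.subset_span ⟨m, List.isChain_iff_pairwise.2 hm, rfl⟩)
  | zero => simp
  | add x y _ _ hx hy => rw [mul_add]; exact add_mem hx hy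
  | smul c x _ hx => rw [mul_smul_comm]; exact Submodule.smul_mem _ c hx

lemma iota_mul_mem {X : CliffordAlgebra (Qf p q r)} (hX : X ∈ monSpan p q r)
    (v : Fin (p + q + r) → ℝ) : ι (Qf p q r) v * X ∈ monSpan p q r := by
  have hv : ι (Qf p q r) v = ∑ j, v j • gen p q r j := by
    conv_lhs => rw [← Finset.univ_sum_single v]
    rw [map_sum]
    refine Finset.sum_congr rfl fun j _ => ?_
    rw [gen, ← map_smul]
    congr 1
    ext k
    by_cases hk : k = j <;> simp [Pi.single_apply, hk]
  rw [hv, Finset.sum_mul]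
  refine Submodule.sum_mem _ fun j _ => ?_
  rw [smul_mul_assoc]
  exact Submodule.smul_mem _ _ (gen_mul_mem p q r hX j)

lemma mem_monSpan (X : CliffordAlgebra (Qf p q r)) : X ∈ monSpan p q r := by
  have one_mem' : (1 : CliffordAlgebra (Qf p q r)) ∈ monSpan p q r :=
    Submodule.subset_span ⟨[], List.isChain_nil, by simp⟩
  have key : ∀ x : CliffordAlgebra (Qf p q r), ∀ y ∈ monSpan p q r,
      x * y ∈ monSpan p q r := by
    intro x
    induction x using CliffordAlgebra.induction with
    | algebraMap c =>
      intro y hy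
      rw [← Algebra.smul_def]
      exact Submodule.smul_mem _ c hy
    | ι v => intro y hy; exact iota_mul_mem p q r hy v
    | mul a b ha hb =>
      intro y hy
      rw [mul_assoc]
      exact ha _ (hb _ hy)
    | add a b ha hb =>
      intro y hy
      rw [add_mul]
      exact add_mem (ha _ hy) (hb _ hy)
  simpa using key X 1 one_mem'

lemma foldP_mem_LambdaR (X : CliffordAlgebra (Qf p q r)) :
    foldP p q r (List.finRange (p + q + r)) X ∈ LambdaR p q r := by
  have h := mem_monSpan p q r X
  have hle : monSpan p q r ≤
      (Subalgebra.toSubmodule (LambdaR p q r)).comap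
        (foldP p q r (List.finRange (p + q + r))) := by
    rw [monSpan, Submodule.span_le]
    rintro x ⟨l, hl, rfl⟩
    have hnd : l.Nodup := (List.isChain_iff_pairwise.1 hl).nodup
    simp only [SetLike.mem_coe, Submodule.mem_comap, Subalgebra.mem_toSubmodule]
    rw [foldP_prod p q r _ l hnd]
    by_cases hex : ∃ i ∈ List.finRange (p + q + r), cliffSig p q i ≠ 0 ∧ i ∈ l
    · rw [if_pos hex]; exact zero_mem _
    · rw [if_neg hex]
      apply mon_mem_LambdaR
      intro i hi
      rw [← sig_zero_iff p q i]
      by_contra hne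
      exact hex ⟨i, List.mem_finRange i, hne, hi⟩
  exact hle h

end Stmt13Aux

/-- In `Cl(p,q,r)`, the twisted centralizer of the grade-1 subspace equals `Λ_r`, the
subalgebra generated by the null generators. -/
theorem stmt13 (p q r : ℕ) (X : CliffordAlgebra (Qf p q r)) :
    (∀ v : Fin (p + q + r) → ℝ, involute X * ι (Qf p q r) v = ι (Qf p q r) v * X) ↔
      X ∈ LambdaR p q r := by
  constructor
  · intro hX
    have hfix : ∀ i, Stmt13Aux.cmap p q r i X = X :=
      Stmt13Aux.cmap_fix p q r hX
    have h1 := Stmt13Aux.foldP_fix p q r hfix (List.finRange (p + q + r))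
    have h2 := Stmt13Aux.foldP_mem_LambdaR p q r X
    rwa [h1] at h2
  · intro hX
    induction hX using Algebra.adjoin_induction with
    | mem x hx =>
      obtain ⟨j, hj, rfl⟩ := hx
      intro v
      rw [gen, involute_ι, ← gen, neg_mul,
        Stmt13Aux.gen_null_swap p q r hj v]
    | algebraMap c =>
      intro v
      rw [AlgHom.commutes, Algebra.commutes]
    | add x y _ _ hx hy =>
      intro v
      rw [map_add, add_mul, mul_add, hx v, hy v]
    | mul x y _ _ hx hy =>
      intro v
      rw [map_mul, mul_assoc, hy v, ← mul_assoc, hx v, mul_assoc]
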